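/- arXiv:2003.01365 — 3 statements merged into one kernel-verified Lean document; each statement's English description precedes it below -/
import Mathlib

section
/- Given ν ≥ 1, k ∈ ℤ and a ∈ ℓ¹_ν (extended symmetrically to ℤ), the linear functional l_a^k(h) = ∑_{k₁+k₂=k} a_{k₁} h_{k₂} on ℓ¹_ν is bounded with operator norm at most sup_{j∈ℤ} |a_{k-j}|/ν^{|j|}. -/
set_option maxHeartbeats 1000000


/-- The weighted ℓ¹ norm `‖a‖_ν = |a 0| + 2 ∑_{n ≥ 1} |a n| ν^n`. -/
noncomputable def wnorm (ν : ℝ) (a : ℕ → ℝ) : ℝ :=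
  |a 0| + 2 * ∑' n : ℕ, |a (n + 1)| * ν ^ (n + 1)

/-- Symmetric extension of a sequence to the integers: `a_{-n} = a_n`. -/
def symExt (a : ℕ → ℝ) : ℤ → ℝ := fun k => a k.natAbs

theorem stmt3 (ν : ℝ) (hν : 1 ≤ ν) (k : ℤ) (a : ℕ → ℝ)
    (ha : Summable (fun n : ℕ => |a n| * ν ^ n))
    (hbd : BddAbove (Set.range fun j : ℤ => |symExt a (k - j)| / ν ^ j.natAbs)) :
    ∀ h : ℕ → ℝ, Summable (fun n : ℕ => |h n| * ν ^ n) →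
      |∑' j : ℤ, symExt a (k - j) * symExt h j| ≤
        (⨆ j : ℤ, |symExt a (k - j)| / ν ^ j.natAbs) * wnorm ν h := by
  intro h hh
  have hν0 : (0:ℝ) < ν := lt_of_lt_of_le one_pos hν
  set C : ℝ := ⨆ j : ℤ, |symExt a (k - j)| / ν ^ j.natAbs with hC
  have hC0 : 0 ≤ C := le_trans (by positivity) (le_ciSup hbd 0)
  have ⟨g, hg⟩ : ∃ g : ℤ → ℝ, g = fun j => |h j.natAbs| * ν ^ j.natAbs := ⟨_, rfl⟩
  have hgnat : (fun n : ℕ => g n) = fun n : ℕ => |h n| * ν ^ n := by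
    funext n; simp [hg]
  have hgneg : (fun n : ℕ => g (-(n + 1))) = fun n : ℕ => |h (n + 1)| * ν ^ (n + 1) := by
    funext n
    have hna : ((-((n:ℤ) + 1))).natAbs = n + 1 := by omega
    simp only [hg, hna]
  have hgnatS : Summable (fun n : ℕ => g n) := by rw [hgnat]; exact hh
  have hgnegS : Summable (fun n : ℕ => g (-(n + 1))) := by
    rw [hgneg]; exact (summable_nat_add_iff 1).mpr hh
  have hgS : Summable g := Summable.of_nat_of_neg_add_one hgnatS hgnegS
  have htg : ∑' j : ℤ, g j = wnorm ν h := by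
    rw [tsum_of_nat_of_neg_add_one hgnatS hgnegS, hgnat, hgneg,
      Summable.tsum_eq_zero_add hh, wnorm]
    simp only [pow_zero, mul_one]
    ring
  -- pointwise bound
  have hpt : ∀ j : ℤ, |symExt a (k - j) * symExt h j| ≤ C * g j := by
    intro j
    have h1 : |symExt a (k - j)| / ν ^ j.natAbs ≤ C := le_ciSup hbd j
    have h2 : |symExt a (k - j)| ≤ C * ν ^ j.natAbs := by
      rw [div_le_iff₀ (by positivity)] at h1; exact h1
    calc |symExt a (k - j) * symExt h j| = |symExt a (k - j)| * |h j.natAbs| := by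
          rw [abs_mul]; rfl
      _ ≤ (C * ν ^ j.natAbs) * |h j.natAbs| :=
          mul_le_mul_of_nonneg_right h2 (abs_nonneg _)
      _ = C * g j := by rw [hg]; ring
  have hCgS : Summable (fun j : ℤ => C * g j) := hgS.mul_left C
  have habsS : Summable (fun j : ℤ => |symExt a (k - j) * symExt h j|) :=
    Summable.of_nonneg_of_le (fun j => abs_nonneg _) hpt hCgS
  have hfS : Summable (fun j : ℤ => symExt a (k - j) * symExt h j) :=
    habsS.of_abs
  calc |∑' j : ℤ, symExt a (k - j) * symExt h j|
      ≤ ∑' j : ℤ, |symExt a (k - j) * symExt h j| := by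
        have := norm_tsum_le_tsum_norm (f := fun j : ℤ => symExt a (k - j) * symExt h j)
          (by simpa [Real.norm_eq_abs, abs_mul] using habsS)
        simpa [Real.norm_eq_abs, abs_mul] using this
    _ ≤ ∑' j : ℤ, C * g j := Summable.tsum_le_tsum hpt habsS hCgS
    _ = C * ∑' j : ℤ, g j := tsum_mul_left
    _ = C * wnorm ν h := by rw [htg]
end

section
/- Assume for all λ ∈ [0, λ*] the eigenvalues of the Sturm–Liouville operator A(λ)u = −u'' − (2λ/(1+u_λ)³)u on H²₀([−π/2, π/2]) satisfy 2λ ≤ k² − μ_k(λ) ≤ 9λ. If p, q, k are positive integers with pj/q ≠ k for a given positive integer j, and λ ∈ [ε, λ*], then the hyperbolic eigenvalue μ_{j,k}(λ, p/q) = −(pj/q)² + μ_k(λ) satisfies |μ_{j,k}(λ, p/q)| ≥ (pj/q + k)/q − 9λ. -/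
theorem stmt7 (lamStar ε : ℝ) (hls : 0 < lamStar) (hε : 0 < ε) (hεls : ε ≤ lamStar)
    (μ : ℕ → ℝ → ℝ)
    (hest : ∀ k : ℕ, 0 < k → ∀ lam ∈ Set.Icc (0 : ℝ) lamStar,
      2 * lam ≤ (k : ℝ) ^ 2 - μ k lam ∧ (k : ℝ) ^ 2 - μ k lam ≤ 9 * lam)
    (p q j k : ℕ) (hp : 0 < p) (hq : 0 < q) (hj : 0 < j) (hk : 0 < k)
    (hne : (p : ℝ) * j / q ≠ (k : ℝ))
    (lam : ℝ) (hlam : lam ∈ Set.Icc ε lamStar) :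
    ((p : ℝ) * j / q + k) / q - 9 * lam ≤ |(-(((p : ℝ) * j / q) ^ 2) + μ k lam)| := by
  obtain ⟨hl1, hl2⟩ := hlam
  have hlam0 : (0:ℝ) ≤ lam := le_trans hε.le hl1
  obtain ⟨hd1, hd2⟩ := hest k hk lam ⟨hlam0, hl2⟩
  have hq' : (0:ℝ) < q := Nat.cast_pos.mpr hq
  set x : ℝ := (p : ℝ) * j / q with hx
  set d : ℝ := (k : ℝ) ^ 2 - μ k lam with hdd
  have hx0 : 0 ≤ x := by positivity
  -- integer gap
  have hn : (1:ℝ)/q ≤ |x - k| := by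
    set n : ℤ := (p * j : ℤ) - k * q with hnn
    have hxk : x - k = (n : ℝ) / q := by
      rw [hnn]
      push_cast
      field_simp [hx]
      rw [hx, sub_mul, div_mul_cancel₀ _ hq'.ne']
    have hn0 : n ≠ 0 := by
      intro h
      apply hne
      have h2 : (p * j : ℤ) = k * q := by linarith [sub_eq_zero.mp h]
      have h3 : ((p:ℝ) * j) = (k:ℝ) * q := by exact_mod_cast h2
      rw [hx, h3]
      field_simp
    have h1 : (1:ℝ) ≤ |(n:ℝ)| := by
      have := Int.one_le_abs hn0
      calc (1:ℝ) ≤ ((|n| : ℤ) : ℝ) := by exact_mod_cast this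
        _ = |(n:ℝ)| := by push_cast; ring
    rw [hxk, abs_div, abs_of_pos hq']
    gcongr
  -- |k^2 - x^2| ≥ (x+k)/q
  have hkx : |(k:ℝ)^2 - x^2| = |x - k| * (x + k) := by
    have : (k:ℝ)^2 - x^2 = -((x - k) * (x + k)) := by ring
    rw [this, abs_neg, abs_mul, abs_of_nonneg (by positivity : (0:ℝ) ≤ x + k)]
  have hgap : (x + k)/q ≤ |(k:ℝ)^2 - x^2| := by
    rw [hkx, div_eq_mul_inv, mul_comm]
    have : (0:ℝ) ≤ x + k := by positivity
    calc (q:ℝ)⁻¹ * (x + k) = (1/q) * (x + k) := by rw [one_div]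
      _ ≤ |x - k| * (x + k) := by
        apply mul_le_mul_of_nonneg_right hn this
  have hdabs : |d| ≤ 9 * lam := by
    rw [abs_le]
    constructor
    · nlinarith
    · exact hd2
  have hmain : -x^2 + μ k lam = ((k:ℝ)^2 - x^2) - d := by
    rw [hdd]; ring
  calc (x + k)/q - 9 * lam ≤ |(k:ℝ)^2 - x^2| - |d| := by linarith
    _ ≤ |((k:ℝ)^2 - x^2) - d| := abs_sub_abs_le_abs_sub _ _
    _ = |(-x^2 + μ k lam)| := by rw [hmain]
end

section
/- Let ν ≥ 1, m ∈ ℕ, and let ᾱ ∈ ℓ¹_ν be a sequence with ᾱ_n = 0 for n > N (extended symmetrically to ℤ). For 0 ≤ k < m, define the functional l̂(h) = ∑_{k₁+k₂=k, |k₂| ≥ m} ᾱ_{k₁} h_{k₂} acting on h extended symmetrically. Then for all h ∈ ℓ¹_ν with ‖h‖_ν ≤ 1, |l̂(h)| ≤ max_{j=m,…,k+m-1} |ᾱ_{k−j} + ᾱ_{k+j}|/(2ν^j), where ᾱ with index of absolute value exceeding N is zero. -/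
set_option maxHeartbeats 1000000

theorem stmt18 (ν : ℝ) (hν : 1 ≤ ν) (m N : ℕ) (hNm : N < m)
    (α : ℕ → ℝ) (hα : ∀ n : ℕ, N < n → α n = 0) (k : ℕ) (hk : k < m)
    (h : ℕ → ℝ) (hsum : Summable (fun n : ℕ => |h n| * ν ^ n))
    (hnorm : wnorm ν h ≤ 1) :
    |∑' k₂ : ℤ, (if m ≤ k₂.natAbs then symExt α ((k : ℤ) - k₂) * symExt h k₂ else 0)| ≤
      ⨆ j : {j : ℕ // m ≤ j ∧ j ≤ k + m - 1},
        |symExt α ((k : ℤ) - (j : ℕ)) + symExt α ((k : ℤ) + (j : ℕ))| /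
          (2 * ν ^ (j : ℕ)) := by
  have hm1 : 1 ≤ m := Nat.lt_of_le_of_lt (Nat.zero_le N) hNm
  have hν0 : (0:ℝ) < ν := lt_of_lt_of_le one_pos hν
  set f : ℤ → ℝ := fun k₂ =>
    if m ≤ k₂.natAbs then symExt α ((k : ℤ) - k₂) * symExt h k₂ else 0 with hf
  set T : Finset ℤ := Finset.Icc (m:ℤ) ((k:ℤ) + N) with hT
  have hsupp : ∀ k₂ ∉ T, f k₂ = 0 := by
    intro k₂ hk₂
    rw [hT, Finset.mem_Icc] at hk₂
    push_neg at hk₂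
    simp only [hf]
    split_ifs with hge
    · have hz : α ((k:ℤ) - k₂).natAbs = 0 := hα _ (by omega)
      simp only [symExt, hz, zero_mul]
    · rfl
  have hts : ∑' k₂ : ℤ, f k₂ = ∑ k₂ ∈ T, f k₂ := tsum_eq_sum hsupp
  rw [hts]
  rcases Nat.eq_zero_or_pos k with rfl | hk1
  · have hTe : T = ∅ := by
      rw [hT]
      apply Finset.Icc_eq_empty
      push_cast
      omega
    rw [hTe, Finset.sum_empty, abs_zero]
    haveI : IsEmpty {j : ℕ // m ≤ j ∧ j ≤ 0 + m - 1} := by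
      constructor; rintro ⟨j, hj1, hj2⟩; omega
    rw [Real.iSup_of_isEmpty]
  · set c := k + m - 1 with hc
    haveI : Nonempty {j : ℕ // m ≤ j ∧ j ≤ c} := ⟨⟨m, le_refl m, by omega⟩⟩
    haveI : Finite {j : ℕ // m ≤ j ∧ j ≤ c} := by
      have : Set.Finite {j : ℕ | m ≤ j ∧ j ≤ c} := (Set.finite_Icc m c).subset (by intro x hx; exact hx)
      exact this.to_subtype
    set g : {j : ℕ // m ≤ j ∧ j ≤ c} → ℝ := fun j =>
      |symExt α ((k : ℤ) - (j : ℕ)) + symExt α ((k : ℤ) + (j : ℕ))| / (2 * ν ^ (j : ℕ)) with hg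
    have hbdd : BddAbove (Set.range g) := Set.Finite.bddAbove (Set.finite_range g)
    have hgnn : ∀ j, 0 ≤ g j := fun j => by positivity
    have hS0 : 0 ≤ ⨆ j, g j :=
      le_trans (hgnn ⟨m, le_refl m, by omega⟩) (le_ciSup hbdd _)
    set S := ⨆ j, g j with hS
    -- per-term bound
    have hterm : ∀ k₂ ∈ T, |f k₂| ≤ S * (2 * (|h k₂.natAbs| * ν ^ k₂.natAbs)) := by
      intro k₂ hk₂
      rw [hT, Finset.mem_Icc] at hk₂
      obtain ⟨hl, hr⟩ := hk₂
      have hj1 : m ≤ k₂.natAbs := by omega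
      have hj2 : k₂.natAbs ≤ c := by omega
      have hjk : ((k₂.natAbs : ℕ) : ℤ) = k₂ := by omega
      have hle : g ⟨k₂.natAbs, hj1, hj2⟩ ≤ S := le_ciSup hbdd _
      have hz2 : symExt α ((k:ℤ) + k₂) = 0 := by
        show α ((k:ℤ) + k₂).natAbs = 0
        apply hα
        omega
      simp only [hf, if_pos hj1]
      rw [hg] at hle
      simp only [hjk] at hle
      rw [hz2, add_zero] at hle
      have h2pos : (0:ℝ) < 2 * ν ^ k₂.natAbs := by positivity
      rw [div_le_iff₀ h2pos] at hle
      calc |symExt α ((k:ℤ) - k₂) * symExt h k₂|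
          = |symExt α ((k:ℤ) - k₂)| * |h k₂.natAbs| := by
            rw [abs_mul]; rfl
        _ ≤ S * (2 * ν ^ k₂.natAbs) * |h k₂.natAbs| := by
            exact mul_le_mul_of_nonneg_right hle (abs_nonneg _)
        _ = S * (2 * (|h k₂.natAbs| * ν ^ k₂.natAbs)) := by ring
    -- sum of weights bound
    have hw : ∑ k₂ ∈ T, 2 * (|h k₂.natAbs| * ν ^ k₂.natAbs) ≤ 1 := by
      have hinj : ∀ x ∈ T, ∀ y ∈ T, x.natAbs - 1 = y.natAbs - 1 → x = y := by
        intro x hx y hy hxy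
        rw [hT, Finset.mem_Icc] at hx hy
        omega
      have hsum' : Summable (fun n : ℕ => |h (n + 1)| * ν ^ (n + 1)) :=
        (summable_nat_add_iff 1).mpr hsum
      have him : ∑ j ∈ T.image (fun x => x.natAbs - 1), |h (j + 1)| * ν ^ (j + 1)
          = ∑ k₂ ∈ T, |h k₂.natAbs| * ν ^ k₂.natAbs := by
        rw [Finset.sum_image hinj]
        apply Finset.sum_congr rfl
        intro x hx
        rw [hT, Finset.mem_Icc] at hx
        have : x.natAbs - 1 + 1 = x.natAbs := by omega
        rw [this]
      have hle2 : ∑ j ∈ T.image (fun x => x.natAbs - 1), |h (j + 1)| * ν ^ (j + 1)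
          ≤ ∑' n : ℕ, |h (n + 1)| * ν ^ (n + 1) :=
        Summable.sum_le_tsum _ (fun n _ => by positivity) hsum'
      have : ∑ k₂ ∈ T, 2 * (|h k₂.natAbs| * ν ^ k₂.natAbs)
          = 2 * ∑ k₂ ∈ T, |h k₂.natAbs| * ν ^ k₂.natAbs := by
        rw [Finset.mul_sum]
      rw [this, ← him]
      have hwn : |h 0| + 2 * ∑' n : ℕ, |h (n + 1)| * ν ^ (n + 1) ≤ 1 := hnorm
      nlinarith [abs_nonneg (h 0), hle2]
    calc |∑ k₂ ∈ T, f k₂| ≤ ∑ k₂ ∈ T, |f k₂| := Finset.abs_sum_le_sum_abs _ _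
      _ ≤ ∑ k₂ ∈ T, S * (2 * (|h k₂.natAbs| * ν ^ k₂.natAbs)) := Finset.sum_le_sum hterm
      _ = S * ∑ k₂ ∈ T, 2 * (|h k₂.natAbs| * ν ^ k₂.natAbs) := by rw [Finset.mul_sum]
      _ ≤ S * 1 := mul_le_mul_of_nonneg_left hw hS0
      _ = S := mul_one S
end
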